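/- arXiv:1901.04995 — 5 statements merged into one kernel-verified Lean document; each statement's English description precedes it below -/
import Mathlib

section
/- Let X ≥ 0 a.s. be integrable with U_a = E[X] > 0. Define p(c) = E[exp(c)/(exp(c)+exp(U_a+X))] and q(c) = exp(U_a)/(exp(U_a)+exp(2c)) for c ∈ ℝ. Then p is strictly increasing, q is strictly decreasing, and p(U_a) ≥ q(U_a); consequently any c satisfying p(c) = q(c) satisfies c ≤ U_a. -/
open MeasureTheory Real Set

lemma rps_aux_convex : ConvexOn ℝ (Set.Ici (0:ℝ)) (fun x => (1 + Real.exp x)⁻¹) := by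
  have hne : ∀ x : ℝ, (1 + Real.exp x) ≠ 0 := fun x => by positivity
  have hne2 : ∀ x : ℝ, ((1 + Real.exp x)^2) ≠ 0 := fun x => by positivity
  refine convexOn_of_hasDerivWithinAt2_nonneg (f' := fun x => -(Real.exp x * (((1 + Real.exp x)^2)⁻¹)))
    (f'' := fun x => -(Real.exp x * ((1 + Real.exp x)^2)⁻¹ +
      Real.exp x * (-(2 * (1 + Real.exp x)^1 * Real.exp x) / ((1 + Real.exp x)^2)^2)))
    (convex_Ici 0) ?_ ?_ ?_ ?_
  · exact ((continuous_const.add Real.continuous_exp).inv₀ hne).continuousOn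
  · intro x _
    have h1 : HasDerivAt (fun x : ℝ => 1 + Real.exp x) (Real.exp x) x :=
      (Real.hasDerivAt_exp x).const_add 1
    have h2 := h1.inv (hne x)
    have h3 : HasDerivAt (fun x : ℝ => (1 + Real.exp x)⁻¹)
        (-(Real.exp x * ((1 + Real.exp x)^2)⁻¹)) x := by
      exact h2.congr_deriv (by ring)
    exact h3.hasDerivWithinAt
  · intro x _
    have h1 : HasDerivAt (fun x : ℝ => 1 + Real.exp x) (Real.exp x) x :=
      (Real.hasDerivAt_exp x).const_add 1
    have hu : HasDerivAt (fun x : ℝ => (1 + Real.exp x)^2)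
        (2 * (1 + Real.exp x)^1 * Real.exp x) x := by
      simpa using h1.fun_pow 2
    have huinv := hu.inv (hne2 x)
    have hmul := (Real.hasDerivAt_exp x).mul huinv
    have := hmul.neg
    exact this.hasDerivWithinAt
  · intro x hx
    rw [interior_Ici, Set.mem_Ioi] at hx
    have he : 1 ≤ Real.exp x := by nlinarith [Real.add_one_le_exp x]
    have h1 : (0:ℝ) < 1 + Real.exp x := by positivity
    have hd : (0:ℝ) < ((1 + Real.exp x)^2)^2 := by positivity
    have heq : Real.exp x * ((1 + Real.exp x)^2)⁻¹ +
        Real.exp x * (-(2 * (1 + Real.exp x)^1 * Real.exp x) / ((1 + Real.exp x)^2)^2)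
        = Real.exp x * (1 + Real.exp x) * (1 - Real.exp x) / ((1 + Real.exp x)^2)^2 := by
      field_simp; ring
    have hle : Real.exp x * (1 + Real.exp x) * (1 - Real.exp x) / ((1 + Real.exp x)^2)^2 ≤ 0 :=
      div_nonpos_of_nonpos_of_nonneg (by
        nlinarith [mul_nonneg (mul_nonneg (Real.exp_pos x).le h1.le)
          (by linarith : (0:ℝ) ≤ Real.exp x - 1)]) hd.le
    show 0 ≤ -(Real.exp x * ((1 + Real.exp x)^2)⁻¹ +
        Real.exp x * (-(2 * (1 + Real.exp x)^1 * Real.exp x) / ((1 + Real.exp x)^2)^2))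
    rw [neg_nonneg, heq]
    exact hle

theorem rps_certainty_equiv_gains {Ω : Type*} [MeasurableSpace Ω] (μ : Measure Ω)
    [IsProbabilityMeasure μ] (X : Ω → ℝ) (hX : Integrable X μ)
    (hpos : ∀ᵐ ω ∂μ, 0 ≤ X ω) (Ua : ℝ) (hUa : Ua = ∫ ω, X ω ∂μ) (hUapos : 0 < Ua)
    (p q : ℝ → ℝ)
    (hp : ∀ c, p c = ∫ ω, Real.exp c / (Real.exp c + Real.exp (Ua + X ω)) ∂μ)
    (hq : ∀ c, q c = Real.exp Ua / (Real.exp Ua + Real.exp (2 * c))) :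
    StrictMono p ∧ StrictAnti q ∧ q Ua ≤ p Ua ∧ ∀ c, p c = q c → c ≤ Ua := by
  have hXm := hX.aestronglyMeasurable
  -- integrability of the p-integrands
  have hint : ∀ c : ℝ, Integrable (fun ω => Real.exp c / (Real.exp c + Real.exp (Ua + X ω))) μ := by
    intro c
    refine Integrable.mono' (integrable_const 1) ?_ ?_
    · have hcont : Continuous (fun t : ℝ => Real.exp c / (Real.exp c + Real.exp (Ua + t))) :=
        continuous_const.div ((continuous_const.add
          (Real.continuous_exp.comp (continuous_const.add continuous_id))))
          (fun t => by positivity)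
      exact hcont.comp_aestronglyMeasurable hXm
    · filter_upwards with ω
      have h1 : (0:ℝ) < Real.exp c + Real.exp (Ua + X ω) := by positivity
      rw [Real.norm_eq_abs, abs_of_nonneg (by positivity)]
      rw [div_le_one h1]
      nlinarith [Real.exp_pos (Ua + X ω)]
  -- strict mono p
  have hmono : StrictMono p := by
    intro c1 c2 hc
    rw [hp c1, hp c2, ← sub_pos, ← integral_sub (hint c2) (hint c1)]
    set g : Ω → ℝ := fun ω => Real.exp c2 / (Real.exp c2 + Real.exp (Ua + X ω))
      - Real.exp c1 / (Real.exp c1 + Real.exp (Ua + X ω)) with hg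
    have hgpos : ∀ ω, 0 < g ω := by
      intro ω
      have hb := Real.exp_pos (Ua + X ω)
      have h1 : (0:ℝ) < Real.exp c1 + Real.exp (Ua + X ω) := by positivity
      have h2 : (0:ℝ) < Real.exp c2 + Real.exp (Ua + X ω) := by positivity
      have he : Real.exp c1 < Real.exp c2 := Real.exp_lt_exp.mpr hc
      rw [hg, sub_pos, div_lt_div_iff₀ h1 h2]
      nlinarith
    have hgi : Integrable g μ := (hint c2).sub (hint c1)
    rw [integral_pos_iff_support_of_nonneg_ae
      (Filter.Eventually.of_forall fun ω => (hgpos ω).le) hgi]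
    have : Function.support g = Set.univ := by
      ext ω; simp [Function.support, (hgpos ω).ne']
    rw [this]
    simp
  -- strict anti q
  have hanti : StrictAnti q := by
    intro c1 c2 hc
    rw [hq c1, hq c2]
    apply div_lt_div_of_pos_left (Real.exp_pos Ua) (by positivity)
    have : Real.exp (2 * c1) < Real.exp (2 * c2) := Real.exp_lt_exp.mpr (by linarith)
    linarith
  -- q Ua ≤ p Ua via Jensen
  have hqp : q Ua ≤ p Ua := by
    have hpUa : p Ua = ∫ ω, (1 + Real.exp (X ω))⁻¹ ∂μ := by
      rw [hp Ua]
      congr 1; ext ω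
      rw [Real.exp_add, eq_comm, inv_eq_one_div, div_eq_div_iff (by positivity) (by positivity)]
      ring
    have hqUa : q Ua = (1 + Real.exp Ua)⁻¹ := by
      rw [hq Ua, two_mul, Real.exp_add, eq_comm, inv_eq_one_div,
        div_eq_div_iff (by positivity) (by positivity)]
      ring
    rw [hpUa, hqUa]
    have hgi : Integrable (fun ω => (1 + Real.exp (X ω))⁻¹) μ := by
      refine Integrable.mono' (integrable_const 1) ?_ ?_
      · exact ((continuous_const.add Real.continuous_exp).inv₀
          (fun x => (add_pos one_pos (Real.exp_pos x)).ne')).comp_aestronglyMeasurable hXm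
      · filter_upwards with ω
        have h1 : (0:ℝ) < 1 + Real.exp (X ω) := by positivity
        rw [Real.norm_eq_abs, abs_of_nonneg (by positivity)]
        rw [inv_le_one_iff₀]
        right
        nlinarith [Real.exp_pos (X ω)]
    have := rps_aux_convex.map_integral_le (μ := μ) (f := X)
      (((continuous_const.add Real.continuous_exp).inv₀
        (fun x => (add_pos one_pos (Real.exp_pos x)).ne')).continuousOn) isClosed_Ici hpos hX hgi
    rw [← hUa] at this
    exact this
  refine ⟨hmono, hanti, hqp, fun c hpq => ?_⟩
  by_contra hlt
  push_neg at hlt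
  have h1 : p Ua < p c := hmono hlt
  have h2 : q c < q Ua := hanti hlt
  linarith [hpq ▸ h1]
end

section
/- Let X ≤ 0 a.s. be integrable with U_a = E[X]. Define p(c) = E[exp(c)/(exp(c)+exp(U_a+X))] and q(c) = exp(U_a)/(exp(U_a)+exp(2c)). Then p(U_a) ≤ q(U_a), so any c with p(c)=q(c) satisfies c ≥ U_a. -/
open MeasureTheory Real

lemma sig_hasDerivAt (x : ℝ) :
    HasDerivAt (fun x => (1 + Real.exp x)⁻¹) (-(Real.exp x) / (1 + Real.exp x) ^ 2) x := by
  have h : HasDerivAt (fun x => 1 + Real.exp x) (Real.exp x) x :=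
    (Real.hasDerivAt_exp x).const_add 1
  exact h.inv (by positivity)

lemma sig_deriv : deriv (fun x => (1 + Real.exp x)⁻¹)
    = fun x => -(Real.exp x) / (1 + Real.exp x) ^ 2 :=
  funext fun x => (sig_hasDerivAt x).deriv

lemma sig_hasDerivAt2 (x : ℝ) :
    HasDerivAt (fun x => -(Real.exp x) / (1 + Real.exp x) ^ 2)
      (Real.exp x * (Real.exp x - 1) / (1 + Real.exp x) ^ 3) x := by
  have hpos : (0:ℝ) < 1 + Real.exp x := by positivity
  have hn : HasDerivAt (fun x => -(Real.exp x)) (-(Real.exp x)) x := (Real.hasDerivAt_exp x).neg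
  have hd : HasDerivAt (fun x => (1 + Real.exp x) ^ 2)
      (2 * (1 + Real.exp x) * Real.exp x) x := by
    have := ((Real.hasDerivAt_exp x).const_add 1).pow 2
    exact this.congr_deriv (by ring)
  have := hn.div hd (by positivity)
  refine this.congr_deriv ?_
  rw [div_eq_div_iff (by positivity) (by positivity)]
  ring

lemma sig_concave : ConcaveOn ℝ (Set.Iic (0:ℝ)) (fun x => (1 + Real.exp x)⁻¹) := by
  apply concaveOn_of_deriv2_nonpos' (convex_Iic 0)
  · intro x _
    exact (sig_hasDerivAt x).differentiableAt.differentiableWithinAt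
  · rw [sig_deriv]
    intro x _
    exact (sig_hasDerivAt2 x).differentiableAt.differentiableWithinAt
  · intro x hx
    have hx0 : Real.exp x ≤ 1 := Real.exp_le_one_iff.2 hx
    have : deriv^[2] (fun x => (1 + Real.exp x)⁻¹) x
        = Real.exp x * (Real.exp x - 1) / (1 + Real.exp x) ^ 3 := by
      simp only [Function.iterate_succ, Function.iterate_zero, Function.comp_apply, id_eq]
      rw [sig_deriv]
      exact (sig_hasDerivAt2 x).deriv
    rw [this]
    have h1 : Real.exp x * (Real.exp x - 1) ≤ 0 :=
      mul_nonpos_of_nonneg_of_nonpos (Real.exp_pos x).le (by linarith)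
    exact div_nonpos_of_nonpos_of_nonneg h1 (by positivity)

theorem rps_certainty_equiv_losses {Ω : Type*} [MeasurableSpace Ω] (μ : Measure Ω)
    [IsProbabilityMeasure μ] (X : Ω → ℝ) (hX : Integrable X μ)
    (hneg : ∀ᵐ ω ∂μ, X ω ≤ 0) (Ua : ℝ) (hUa : Ua = ∫ ω, X ω ∂μ)
    (p q : ℝ → ℝ)
    (hp : ∀ c, p c = ∫ ω, Real.exp c / (Real.exp c + Real.exp (Ua + X ω)) ∂μ)
    (hq : ∀ c, q c = Real.exp Ua / (Real.exp Ua + Real.exp (2 * c))) :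
    p Ua ≤ q Ua ∧ ∀ c, p c = q c → Ua ≤ c := by
  -- integrand equals sigmoid of X for c = Ua
  have hsimp : ∀ ω, Real.exp Ua / (Real.exp Ua + Real.exp (Ua + X ω))
      = (1 + Real.exp (X ω))⁻¹ := by
    intro ω
    rw [Real.exp_add]
    rw [show Real.exp Ua + Real.exp Ua * Real.exp (X ω)
        = Real.exp Ua * (1 + Real.exp (X ω)) by ring]
    rw [div_eq_iff (by positivity)]
    field_simp
  -- integrability of bounded integrands
  have hcont : Continuous fun x : ℝ => (1 + Real.exp x)⁻¹ :=
    (continuous_const.add Real.continuous_exp).inv₀ (fun x => (add_pos one_pos (Real.exp_pos x)).ne')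
  have hmeas : AEStronglyMeasurable (fun ω => (1 + Real.exp (X ω))⁻¹) μ :=
    hcont.comp_aestronglyMeasurable hX.aestronglyMeasurable
  have hint : Integrable (fun ω => (1 + Real.exp (X ω))⁻¹) μ := by
    refine Integrable.mono' (integrable_const 1) hmeas ?_
    filter_upwards with ω
    rw [Real.norm_eq_abs, abs_of_nonneg (by positivity)]
    rw [inv_le_one_iff₀]
    right
    nlinarith [Real.exp_pos (X ω)]
  have hintc : ∀ c, Integrable (fun ω => Real.exp c / (Real.exp c + Real.exp (Ua + X ω))) μ := by
    intro c
    have hm : AEStronglyMeasurable (fun ω => Real.exp c / (Real.exp c + Real.exp (Ua + X ω))) μ := by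
      have hc : Continuous fun x : ℝ => Real.exp c / (Real.exp c + Real.exp (Ua + x)) := by
        apply continuous_const.div
        · exact continuous_const.add (Real.continuous_exp.comp (continuous_const.add continuous_id))
        · intro x; positivity
      exact hc.comp_aestronglyMeasurable hX.aestronglyMeasurable
    refine Integrable.mono' (integrable_const 1) hm ?_
    filter_upwards with ω
    rw [Real.norm_eq_abs, abs_of_nonneg (by positivity)]
    rw [div_le_one (by positivity)]
    nlinarith [Real.exp_pos (Ua + X ω), Real.exp_pos c]
  -- Jensen
  have hjensen : p Ua ≤ q Ua := by
    rw [hp, hq]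
    calc ∫ ω, Real.exp Ua / (Real.exp Ua + Real.exp (Ua + X ω)) ∂μ
        = ∫ ω, (1 + Real.exp (X ω))⁻¹ ∂μ := by
          exact integral_congr_ae (Filter.Eventually.of_forall fun ω => hsimp ω)
      _ ≤ (1 + Real.exp (∫ ω, X ω ∂μ))⁻¹ := by
          exact ConcaveOn.le_map_integral sig_concave (hcont.continuousOn) isClosed_Iic
            hneg hX hint
      _ = Real.exp Ua / (Real.exp Ua + Real.exp (2 * Ua)) := by
          rw [← hUa, two_mul, Real.exp_add]
          rw [show Real.exp Ua + Real.exp Ua * Real.exp Ua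
              = Real.exp Ua * (1 + Real.exp Ua) by ring]
          rw [eq_div_iff (by positivity)]
          field_simp
  refine ⟨hjensen, ?_⟩
  intro c hpq
  by_contra hlt
  push_neg at hlt
  -- p c ≤ p Ua
  have hple : p c ≤ p Ua := by
    rw [hp, hp]
    apply integral_mono (hintc c) (hintc Ua)
    intro ω
    have hA : (0:ℝ) < Real.exp (Ua + X ω) := Real.exp_pos _
    have hec : Real.exp c ≤ Real.exp Ua := Real.exp_le_exp.2 hlt.le
    rw [div_le_div_iff₀ (by positivity) (by positivity)]
    nlinarith [Real.exp_pos c, Real.exp_pos Ua]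
  -- q Ua < q c
  have hqlt : q Ua < q c := by
    rw [hq, hq]
    apply div_lt_div_of_pos_left (Real.exp_pos Ua) (by positivity)
    have : Real.exp (2 * c) < Real.exp (2 * Ua) := Real.exp_lt_exp.2 (by linarith)
    linarith
  linarith
end

section
/- Let X, Y be random variables with values in [0,∞) such that X first-order stochastically dominates Y (i.e., P(X > t) ≥ P(Y > t) for all t, with strict inequality for some t). Let U : [0,∞) → [0,∞) be strictly increasing and continuous with suitable integrability, and set U_a = E[U(X)], U_b = E[U(Y)]. Then U_b < U_a, and E[U_b/(U_a+U_b+U(X))] < E[U_a/(U_a+U_b+U(Y))]; that is, X is preferred to Y under RPS(1) preferences. -/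
open MeasureTheory

/-- Levels of a strictly monotone continuous function on `[0,∞)` correspond to levels
of the underlying variable, so FSD transfers through `W`. -/
lemma rps_meas_comp_le {Ω : Type*} [MeasurableSpace Ω] (μ : Measure Ω) (X Y : Ω → ℝ)
    (hXpos : ∀ ω, 0 ≤ X ω) (hYpos : ∀ ω, 0 ≤ Y ω)
    (hFSD : ∀ t : ℝ, μ {ω | Y ω > t} ≤ μ {ω | X ω > t})
    (W : ℝ → ℝ) (hW : StrictMonoOn W (Set.Ici 0)) (hWc : ContinuousOn W (Set.Ici 0))
    (t : ℝ) : μ {ω | t < W (Y ω)} ≤ μ {ω | t < W (X ω)} := by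
  by_cases h0 : t < W 0
  · have hX : {ω | t < W (X ω)} = Set.univ := by
      ext ω
      simp only [Set.mem_setOf_eq, Set.mem_univ, iff_true]
      exact lt_of_lt_of_le h0 (hW.monotoneOn (Set.mem_Ici.2 le_rfl) (hXpos ω) (hXpos ω))
    rw [hX]
    exact measure_mono (Set.subset_univ _)
  by_cases hex : ∃ x, 0 ≤ x ∧ t < W x
  · obtain ⟨x0, hx0, hWx0⟩ := hex
    set A : Set ℝ := Set.Ici 0 ∩ W ⁻¹' Set.Iic t with hA
    have hAne : A.Nonempty := ⟨0, Set.mem_Ici.2 le_rfl, by simpa using not_lt.1 h0⟩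
    have hAbdd : BddAbove A := by
      refine ⟨x0, fun x hx => ?_⟩
      by_contra hxx
      push_neg at hxx
      exact absurd (hW.monotoneOn hx0 (le_trans hx0 hxx.le) hxx.le)
        (not_le.2 (lt_of_le_of_lt hx.2 hWx0))
    have hAclosed : IsClosed A := hWc.preimage_isClosed_of_isClosed isClosed_Ici isClosed_Iic
    set c := sSup A with hc
    have hcA : c ∈ A := hAclosed.csSup_mem hAne hAbdd
    have hc0 : 0 ≤ c := hcA.1
    have hWct : W c ≤ t := hcA.2
    have key : ∀ x : ℝ, 0 ≤ x → (t < W x ↔ c < x) := by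
      intro x hx
      constructor
      · intro h
        by_contra hcx
        push_neg at hcx
        exact absurd (hW.monotoneOn (Set.mem_Ici.2 hx) (Set.mem_Ici.2 hc0) hcx)
          (not_le.2 (lt_of_le_of_lt hWct h))
      · intro h
        by_contra hW'
        push_neg at hW'
        exact absurd (le_csSup hAbdd ⟨Set.mem_Ici.2 hx, hW'⟩) (not_le.2 h)
    have hXeq : {ω | t < W (X ω)} = {ω | X ω > c} := by
      ext ω; exact key (X ω) (hXpos ω)
    have hYeq : {ω | t < W (Y ω)} = {ω | Y ω > c} := by
      ext ω; exact key (Y ω) (hYpos ω)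
    rw [hXeq, hYeq]
    exact hFSD c
  · push_neg at hex
    have hY : {ω | t < W (Y ω)} = ∅ := by
      ext ω
      simp only [Set.mem_setOf_eq, Set.mem_empty_iff_false, iff_false, not_lt]
      exact hex (Y ω) (hYpos ω)
    rw [hY]
    simp

/-- Weak FSD monotonicity of expectations for strictly monotone nonnegative `W`. -/
lemma rps_integral_comp_le {Ω : Type*} [MeasurableSpace Ω] (μ : Measure Ω)
    [IsProbabilityMeasure μ] (X Y : Ω → ℝ)
    (hXpos : ∀ ω, 0 ≤ X ω) (hYpos : ∀ ω, 0 ≤ Y ω)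
    (hFSD : ∀ t : ℝ, μ {ω | Y ω > t} ≤ μ {ω | X ω > t})
    (W : ℝ → ℝ) (hW : StrictMonoOn W (Set.Ici 0)) (hWc : ContinuousOn W (Set.Ici 0))
    (hWpos : ∀ x ∈ Set.Ici (0:ℝ), 0 ≤ W x)
    (hXint : Integrable (fun ω => W (X ω)) μ) (hYint : Integrable (fun ω => W (Y ω)) μ) :
    ∫ ω, W (Y ω) ∂μ ≤ ∫ ω, W (X ω) ∂μ := by
  have hXnn : 0 ≤ᵐ[μ] fun ω => W (X ω) :=
    Filter.Eventually.of_forall fun ω => hWpos _ (hXpos ω)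
  have hYnn : 0 ≤ᵐ[μ] fun ω => W (Y ω) :=
    Filter.Eventually.of_forall fun ω => hWpos _ (hYpos ω)
  have hX := ofReal_integral_eq_lintegral_ofReal hXint hXnn
  have hY := ofReal_integral_eq_lintegral_ofReal hYint hYnn
  have hXl := lintegral_eq_lintegral_meas_lt μ hXnn hXint.aemeasurable
  have hYl := lintegral_eq_lintegral_meas_lt μ hYnn hYint.aemeasurable
  have hle : ENNReal.ofReal (∫ ω, W (Y ω) ∂μ) ≤ ENNReal.ofReal (∫ ω, W (X ω) ∂μ) := by
    rw [hX, hY, hXl, hYl]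
    exact lintegral_mono fun t => rps_meas_comp_le μ X Y hXpos hYpos hFSD W hW hWc t
  have hXi : 0 ≤ ∫ ω, W (X ω) ∂μ := integral_nonneg fun ω => hWpos _ (hXpos ω)
  have hYi : 0 ≤ ∫ ω, W (Y ω) ∂μ := integral_nonneg fun ω => hWpos _ (hYpos ω)
  exact (ENNReal.ofReal_le_ofReal_iff hXi).1 hle

/-- Strict FSD monotonicity of expectations. -/
lemma rps_integral_comp_lt {Ω : Type*} [MeasurableSpace Ω] (μ : Measure Ω)
    [IsProbabilityMeasure μ] (X Y : Ω → ℝ)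
    (hXpos : ∀ ω, 0 ≤ X ω) (hYpos : ∀ ω, 0 ≤ Y ω)
    (hFSD : ∀ t : ℝ, μ {ω | Y ω > t} ≤ μ {ω | X ω > t})
    (hstrict : ∃ t : ℝ, μ {ω | Y ω > t} < μ {ω | X ω > t})
    (W : ℝ → ℝ) (hW : StrictMonoOn W (Set.Ici 0)) (hWc : ContinuousOn W (Set.Ici 0))
    (hWpos : ∀ x ∈ Set.Ici (0:ℝ), 0 ≤ W x)
    (hXint : Integrable (fun ω => W (X ω)) μ) (hYint : Integrable (fun ω => W (Y ω)) μ) :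
    ∫ ω, W (Y ω) ∂μ < ∫ ω, W (X ω) ∂μ := by
  obtain ⟨t₀, ht₀⟩ := hstrict
  -- t₀ must be nonnegative
  have ht₀0 : 0 ≤ t₀ := by
    by_contra h
    push_neg at h
    have hYuniv : {ω | Y ω > t₀} = Set.univ := by
      ext ω
      simp only [Set.mem_setOf_eq, Set.mem_univ, iff_true]
      exact lt_of_lt_of_le h (hYpos ω)
    rw [hYuniv, measure_univ] at ht₀
    exact absurd ht₀ (not_lt.2 prob_le_one)
  -- find δ > 0 with μ {Y > t₀} < μ {X > t₀ + δ}
  obtain ⟨δ, hδ0, hδ⟩ : ∃ δ : ℝ, 0 < δ ∧ μ {ω | Y ω > t₀} < μ {ω | X ω > t₀ + δ} := by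
    have hunion : {ω | X ω > t₀} = ⋃ n : ℕ, {ω | X ω > t₀ + 1 / (n + 1)} := by
      ext ω
      simp only [Set.mem_setOf_eq, Set.mem_iUnion]
      constructor
      · intro h
        obtain ⟨n, hn⟩ := exists_nat_one_div_lt (sub_pos.2 h)
        exact ⟨n, by push_cast at hn ⊢; linarith⟩
      · rintro ⟨n, hn⟩
        have : (0:ℝ) < 1 / (n + 1) := by positivity
        linarith
    have hmono : Monotone fun n : ℕ => {ω | X ω > t₀ + 1 / (n + 1 : ℝ)} := by
      intro m n hmn ω hω
      simp only [Set.mem_setOf_eq] at hω ⊢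
      have : (1 : ℝ) / (n + 1) ≤ 1 / (m + 1) := by
        apply one_div_le_one_div_of_le (by positivity)
        exact_mod_cast Nat.add_le_add_right hmn 1
      linarith
    have := hmono.measure_iUnion (μ := μ)
    rw [← hunion] at this
    rw [this] at ht₀
    obtain ⟨n, hn⟩ := lt_iSup_iff.1 ht₀
    exact ⟨1 / (n + 1), by positivity, hn⟩
  -- layer-cake setup
  have hXnn : 0 ≤ᵐ[μ] fun ω => W (X ω) :=
    Filter.Eventually.of_forall fun ω => hWpos _ (hXpos ω)
  have hYnn : 0 ≤ᵐ[μ] fun ω => W (Y ω) :=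
    Filter.Eventually.of_forall fun ω => hWpos _ (hYpos ω)
  set f : ℝ → ENNReal := fun t => μ {ω | t < W (Y ω)} with hf
  set g : ℝ → ENNReal := fun t => μ {ω | t < W (X ω)} with hg
  have hfg : ∀ t, f t ≤ g t := fun t =>
    rps_meas_comp_le μ X Y hXpos hYpos hFSD W hW hWc t
  have hfant : Antitone f := fun s t hst =>
    measure_mono fun ω hω => lt_of_le_of_lt hst hω
  have hgant : Antitone g := fun s t hst =>
    measure_mono fun ω hω => lt_of_le_of_lt hst hω
  have hfm : Measurable f := hfant.measurable
  have hgm : Measurable g := hgant.measurable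
  -- strict inequality of g over f on an interval
  set s1 : ℝ := W t₀ with hs1
  set s2 : ℝ := W (t₀ + δ) with hs2
  have hs12 : s1 < s2 := hW (Set.mem_Ici.2 ht₀0) (Set.mem_Ici.2 (by linarith)) (by linarith)
  have hs10 : 0 ≤ s1 := hWpos _ (Set.mem_Ici.2 ht₀0)
  have hIoo : ∀ s ∈ Set.Ioo s1 s2, f s < g s := by
    rintro s ⟨hs1', hs2'⟩
    -- find t ∈ [t₀, t₀+δ) with W t = s
    have hWsub : ContinuousOn W (Set.Icc t₀ (t₀ + δ)) :=
      hWc.mono fun x hx => Set.mem_Ici.2 (le_trans ht₀0 hx.1)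
    have hiv := intermediate_value_Icc (by linarith : t₀ ≤ t₀ + δ) hWsub
    obtain ⟨t, htmem, hWt⟩ := hiv ⟨le_of_lt hs1', le_of_lt hs2'⟩
    have ht0 : 0 ≤ t := le_trans ht₀0 htmem.1
    have htlt : t < t₀ + δ := by
      rcases lt_or_eq_of_le htmem.2 with h | h
      · exact h
      · exfalso
        subst h
        rw [hs2, hWt] at hs2'
        exact lt_irrefl _ hs2'
    have hYeq : {ω | s < W (Y ω)} = {ω | Y ω > t} := by
      ext ω
      simp only [Set.mem_setOf_eq, ← hWt]
      exact hW.lt_iff_lt (Set.mem_Ici.2 ht0) (Set.mem_Ici.2 (hYpos ω))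
    have hXeq : {ω | s < W (X ω)} = {ω | X ω > t} := by
      ext ω
      simp only [Set.mem_setOf_eq, ← hWt]
      exact hW.lt_iff_lt (Set.mem_Ici.2 ht0) (Set.mem_Ici.2 (hXpos ω))
    calc f s = μ {ω | Y ω > t} := by rw [hf]; exact congrArg μ hYeq
      _ ≤ μ {ω | Y ω > t₀} := measure_mono fun ω hω => lt_of_le_of_lt htmem.1 hω
      _ < μ {ω | X ω > t₀ + δ} := hδ
      _ ≤ μ {ω | X ω > t} := measure_mono fun ω hω => lt_trans htlt hω
      _ = g s := by rw [hg]; exact (congrArg μ hXeq).symm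
  -- positive lintegral of the difference
  have hdiffm : Measurable fun t => g t - f t := hgm.sub hfm
  have hpos : 0 < ∫⁻ t in Set.Ioi (0:ℝ), (g t - f t) := by
    rw [lintegral_pos_iff_support hdiffm]
    have hsub : Set.Ioo s1 s2 ⊆ Function.support fun t => g t - f t := by
      intro s hs
      simp only [Function.mem_support, ne_eq]
      exact (tsub_pos_iff_lt.2 (hIoo s hs)).ne'
    calc (0:ENNReal) < volume (Set.Ioo s1 s2) := by simp [hs12]
      _ = (volume.restrict (Set.Ioi 0)) (Set.Ioo s1 s2) := by
          rw [Measure.restrict_apply measurableSet_Ioo]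
          congr 1
          exact (Set.inter_eq_left.2 fun x hx => lt_of_le_of_lt hs10 hx.1).symm
      _ ≤ (volume.restrict (Set.Ioi 0)) (Function.support fun t => g t - f t) :=
          measure_mono hsub
  -- conclude via layer cake
  have hX := ofReal_integral_eq_lintegral_ofReal hXint hXnn
  have hY := ofReal_integral_eq_lintegral_ofReal hYint hYnn
  have hXl := lintegral_eq_lintegral_meas_lt μ hXnn hXint.aemeasurable
  have hYl := lintegral_eq_lintegral_meas_lt μ hYnn hYint.aemeasurable
  have hffin : ∫⁻ t in Set.Ioi (0:ℝ), f t ≠ ⊤ := by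
    rw [← hYl, ← hY]; exact ENNReal.ofReal_ne_top
  have hglt : (∫⁻ t in Set.Ioi (0:ℝ), f t) < ∫⁻ t in Set.Ioi (0:ℝ), g t := by
    have heq : (∫⁻ t in Set.Ioi (0:ℝ), g t)
        = (∫⁻ t in Set.Ioi (0:ℝ), (g t - f t)) + ∫⁻ t in Set.Ioi (0:ℝ), f t := by
      rw [← lintegral_add_left (hdiffm) f]
      apply lintegral_congr fun t => ?_
      exact (tsub_add_cancel_of_le (hfg t)).symm
    rw [heq, add_comm]
    exact ENNReal.lt_add_right hffin hpos.ne'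
  have : ENNReal.ofReal (∫ ω, W (Y ω) ∂μ) < ENNReal.ofReal (∫ ω, W (X ω) ∂μ) := by
    rw [hX, hY, hXl, hYl]; exact hglt
  have hYi : 0 ≤ ∫ ω, W (Y ω) ∂μ := integral_nonneg fun ω => hWpos _ (hYpos ω)
  exact (ENNReal.ofReal_lt_ofReal_iff_of_nonneg hYi).1 this

theorem rps_respects_fsd {Ω : Type*} [MeasurableSpace Ω] (μ : Measure Ω)
    [IsProbabilityMeasure μ] (X Y : Ω → ℝ) (hXm : Measurable X) (hYm : Measurable Y)
    (hXpos : ∀ ω, 0 ≤ X ω) (hYpos : ∀ ω, 0 ≤ Y ω)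
    (hFSD : ∀ t : ℝ, μ {ω | Y ω > t} ≤ μ {ω | X ω > t})
    (hstrict : ∃ t : ℝ, μ {ω | Y ω > t} < μ {ω | X ω > t})
    (U : ℝ → ℝ) (hUmono : StrictMonoOn U (Set.Ici 0))
    (hUcont : ContinuousOn U (Set.Ici 0)) (hUpos : ∀ x ∈ Set.Ici (0:ℝ), 0 ≤ U x)
    (hXint : Integrable (fun ω => U (X ω)) μ) (hYint : Integrable (fun ω => U (Y ω)) μ)
    (Ua Ub : ℝ) (hUa : Ua = ∫ ω, U (X ω) ∂μ) (hUb : Ub = ∫ ω, U (Y ω) ∂μ) :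
    Ub < Ua ∧
      (∫ ω, Ub / (Ua + Ub + U (X ω)) ∂μ) < ∫ ω, Ua / (Ua + Ub + U (Y ω)) ∂μ := by
  have hba : Ub < Ua := by
    rw [hUa, hUb]
    exact rps_integral_comp_lt μ X Y hXpos hYpos hFSD hstrict U hUmono hUcont hUpos hXint hYint
  have hb0 : 0 ≤ Ub := by
    rw [hUb]; exact integral_nonneg fun ω => hUpos _ (Set.mem_Ici.2 (hYpos ω))
  have ha0 : 0 < Ua := lt_of_le_of_lt hb0 hba
  set s0 : ℝ := Ua + Ub with hs0def
  have hs0 : 0 < s0 := by positivity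
  have hden : ∀ x ∈ Set.Ici (0:ℝ), 0 < s0 + U x := fun x hx =>
    add_pos_of_pos_of_nonneg hs0 (hUpos x hx)
  -- the auxiliary increasing bounded function
  set C : ℝ := (s0 + U 0)⁻¹ with hC
  set W : ℝ → ℝ := fun x => C - (s0 + U x)⁻¹ with hWdef
  have hWmono : StrictMonoOn W (Set.Ici 0) := by
    intro x hx y hy hxy
    have h1 : U x < U y := hUmono hx hy hxy
    have := hden x hx
    have := hden y hy
    simp only [hWdef]
    have : (s0 + U y)⁻¹ < (s0 + U x)⁻¹ := by
      apply inv_strictAnti₀ (hden x hx)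
      linarith
    linarith
  have hWcont : ContinuousOn W (Set.Ici 0) := by
    apply continuousOn_const.sub
    exact ((continuousOn_const.add hUcont).inv₀ fun x hx => (hden x hx).ne')
  have hWpos : ∀ x ∈ Set.Ici (0:ℝ), 0 ≤ W x := by
    intro x hx
    simp only [hWdef, hC, sub_nonneg]
    apply inv_anti₀ (hden 0 (Set.mem_Ici.2 le_rfl))
    have := hUmono.monotoneOn (Set.mem_Ici.2 le_rfl) hx hx
    linarith
  have hWle : ∀ x ∈ Set.Ici (0:ℝ), W x ≤ C := by
    intro x hx
    simp only [hWdef]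
    have := le_of_lt (inv_pos.2 (hden x hx))
    linarith
  -- integrability of the inverse-denominator functions
  have hinvXm : AEStronglyMeasurable (fun ω => (s0 + U (X ω))⁻¹) μ :=
    ((aestronglyMeasurable_const.add hXint.aestronglyMeasurable).aemeasurable.inv).aestronglyMeasurable
  have hinvYm : AEStronglyMeasurable (fun ω => (s0 + U (Y ω))⁻¹) μ :=
    ((aestronglyMeasurable_const.add hYint.aestronglyMeasurable).aemeasurable.inv).aestronglyMeasurable
  have hinvXint : Integrable (fun ω => (s0 + U (X ω))⁻¹) μ := by
    refine ⟨hinvXm, HasFiniteIntegral.of_bounded (C := s0⁻¹) ?_⟩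
    refine Filter.Eventually.of_forall fun ω => ?_
    rw [Real.norm_eq_abs, abs_of_nonneg (le_of_lt (inv_pos.2 (hden _ (Set.mem_Ici.2 (hXpos ω)))))]
    apply inv_anti₀ hs0
    have := hUpos _ (Set.mem_Ici.2 (hXpos ω)); linarith
  have hinvYint : Integrable (fun ω => (s0 + U (Y ω))⁻¹) μ := by
    refine ⟨hinvYm, HasFiniteIntegral.of_bounded (C := s0⁻¹) ?_⟩
    refine Filter.Eventually.of_forall fun ω => ?_
    rw [Real.norm_eq_abs, abs_of_nonneg (le_of_lt (inv_pos.2 (hden _ (Set.mem_Ici.2 (hYpos ω)))))]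
    apply inv_anti₀ hs0
    have := hUpos _ (Set.mem_Ici.2 (hYpos ω)); linarith
  have hWXint : Integrable (fun ω => W (X ω)) μ := (integrable_const C).sub hinvXint
  have hWYint : Integrable (fun ω => W (Y ω)) μ := (integrable_const C).sub hinvYint
  -- weak inequality for W transfers to inverse denominators
  have hWle2 : ∫ ω, W (Y ω) ∂μ ≤ ∫ ω, W (X ω) ∂μ :=
    rps_integral_comp_le μ X Y hXpos hYpos hFSD W hWmono hWcont hWpos hWXint hWYint
  have hIXY : ∫ ω, (s0 + U (X ω))⁻¹ ∂μ ≤ ∫ ω, (s0 + U (Y ω))⁻¹ ∂μ := by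
    have hx : ∫ ω, W (X ω) ∂μ = (∫ ω, (C:ℝ) ∂μ) - ∫ ω, (s0 + U (X ω))⁻¹ ∂μ :=
      integral_sub (integrable_const C) hinvXint
    have hy : ∫ ω, W (Y ω) ∂μ = (∫ ω, (C:ℝ) ∂μ) - ∫ ω, (s0 + U (Y ω))⁻¹ ∂μ :=
      integral_sub (integrable_const C) hinvYint
    rw [hx, hy] at hWle2
    linarith
  -- positivity of ∫ (s0 + U(Y))⁻¹
  have hIYpos : 0 < ∫ ω, (s0 + U (Y ω))⁻¹ ∂μ := by
    rw [integral_pos_iff_support_of_nonneg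
      (fun ω => le_of_lt (inv_pos.2 (hden _ (Set.mem_Ici.2 (hYpos ω))))) hinvYint]
    have : (Function.support fun ω => (s0 + U (Y ω))⁻¹) = Set.univ := by
      ext ω
      simp only [Function.mem_support, Set.mem_univ, iff_true, ne_eq]
      exact (inv_pos.2 (hden _ (Set.mem_Ici.2 (hYpos ω)))).ne'
    rw [this]
    simp
  refine ⟨hba, ?_⟩
  have hXrw : (∫ ω, Ub / (Ua + Ub + U (X ω)) ∂μ) = Ub * ∫ ω, (s0 + U (X ω))⁻¹ ∂μ := by
    simp_rw [div_eq_mul_inv, ← hs0def]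
    exact integral_const_mul Ub _
  have hYrw : (∫ ω, Ua / (Ua + Ub + U (Y ω)) ∂μ) = Ua * ∫ ω, (s0 + U (Y ω))⁻¹ ∂μ := by
    simp_rw [div_eq_mul_inv, ← hs0def]
    exact integral_const_mul Ua _
  rw [hXrw, hYrw]
  calc Ub * ∫ ω, (s0 + U (X ω))⁻¹ ∂μ
      ≤ Ub * ∫ ω, (s0 + U (Y ω))⁻¹ ∂μ := mul_le_mul_of_nonneg_left hIXY hb0
    _ < Ua * ∫ ω, (s0 + U (Y ω))⁻¹ ∂μ := mul_lt_mul_of_pos_right hba hIYpos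
end

section
/- There exist random variables X and Y with E[X] = E[Y] = U_a and a constant c > 0 with c ≠ U_a such that E[c/(U_a+c+X)] = E[c/(U_a+c+Y)] but E[U_a/(2U_a+X)] ≠ E[U_a/(2U_a+Y)]. -/
open MeasureTheory

theorem rps_not_transitive :
    ∃ (Ω : Type) (_ : MeasurableSpace Ω) (μ : Measure Ω) (_ : IsProbabilityMeasure μ)
      (X Y : Ω → ℝ) (Ua c : ℝ),
      Integrable X μ ∧ Integrable Y μ ∧
      (∫ ω, X ω ∂μ) = Ua ∧ (∫ ω, Y ω ∂μ) = Ua ∧ 0 < c ∧ c ≠ Ua ∧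
      (∫ ω, c / (Ua + c + X ω) ∂μ) = (∫ ω, c / (Ua + c + Y ω) ∂μ) ∧
      (∫ ω, Ua / (2 * Ua + X ω) ∂μ) ≠ (∫ ω, Ua / (2 * Ua + Y ω) ∂μ) := by
  refine ⟨Fin 3, inferInstance, (PMF.uniformOfFintype (Fin 3)).toMeasure, inferInstance,
    ![(-1 : ℝ), -1, 5], ![(-5/3 : ℝ), 7/3, 7/3], 1, 2,
    Integrable.of_finite, Integrable.of_finite, ?_, ?_, by norm_num, by norm_num, ?_, ?_⟩ <;>
  · simp only [PMF.integral_eq_sum, PMF.uniformOfFintype_apply, Fintype.card_fin,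
      Fin.sum_univ_three, smul_eq_mul]
    norm_num [Matrix.cons_val_zero, Matrix.cons_val_one, Matrix.head_cons, Matrix.cons_val_two, Matrix.tail_cons]
end

section
/- Let U : ℝ → ℝ and Φ : ℝ → (0,∞) with Φ(x) = exp(x/d), d > 0. For random payoffs X, Y with U_a = E[U(X)], U_b = E[U(Y)], if X ≥ Y pointwise (as coupled random variables on the same space) with strict inequality on a set of positive measure and U is strictly increasing, then E[Φ(U_b)/(Φ(U_b)+Φ(U_a+U(X)))] < E[Φ(U_a)/(Φ(U_a)+Φ(U_b+U(Y)))]. -/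
open MeasureTheory

theorem rps_phi_monotone {Ω : Type*} [MeasurableSpace Ω] (μ : Measure Ω)
    [IsProbabilityMeasure μ] (U : ℝ → ℝ) (hU : StrictMono U)
    (d : ℝ) (hd : 0 < d) (Φ : ℝ → ℝ) (hΦ : ∀ x, Φ x = Real.exp (x / d))
    (X Y : Ω → ℝ)
    (hXint : Integrable (fun ω => U (X ω)) μ) (hYint : Integrable (fun ω => U (Y ω)) μ)
    (hdom : ∀ ω, Y ω ≤ X ω) (hstrict : 0 < μ {ω | Y ω < X ω})
    (Ua Ub : ℝ) (hUa : Ua = ∫ ω, U (X ω) ∂μ) (hUb : Ub = ∫ ω, U (Y ω) ∂μ) :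
    (∫ ω, Φ Ub / (Φ Ub + Φ (Ua + U (X ω))) ∂μ) <
      ∫ ω, Φ Ua / (Φ Ua + Φ (Ub + U (Y ω))) ∂μ := by
  -- Step 1: Ua > Ub
  have hUab : Ub < Ua := by
    rw [hUa, hUb]
    have hnn : 0 ≤ᵐ[μ] fun ω => U (X ω) - U (Y ω) :=
      Filter.Eventually.of_forall fun ω => sub_nonneg.2 (hU.monotone (hdom ω))
    have hint : Integrable (fun ω => U (X ω) - U (Y ω)) μ := hXint.sub hYint
    have hpos : 0 < ∫ ω, (U (X ω) - U (Y ω)) ∂μ := by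
      rw [integral_pos_iff_support_of_nonneg_ae hnn hint]
      refine lt_of_lt_of_le hstrict (measure_mono ?_)
      intro ω hω
      exact sub_ne_zero.2 (ne_of_gt (hU hω))
    rw [integral_sub hXint hYint] at hpos
    linarith
  simp only [hΦ]
  -- the two integrands as compositions of continuous functions
  set F : ℝ → ℝ := fun u => Real.exp (Ub / d) / (Real.exp (Ub / d) + Real.exp ((Ua + u) / d))
    with hF
  set G : ℝ → ℝ := fun u => Real.exp (Ua / d) / (Real.exp (Ua / d) + Real.exp ((Ub + u) / d))
    with hG
  have hFc : Continuous F := by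
    apply continuous_const.div
    · exact continuous_const.add (Real.continuous_exp.comp ((continuous_const.add
        continuous_id).div_const d))
    · intro u; positivity
  have hGc : Continuous G := by
    apply continuous_const.div
    · exact continuous_const.add (Real.continuous_exp.comp ((continuous_const.add
        continuous_id).div_const d))
    · intro u; positivity
  have hmF : AEStronglyMeasurable (fun ω => F (U (X ω))) μ :=
    hFc.comp_aestronglyMeasurable hXint.aestronglyMeasurable
  have hmG : AEStronglyMeasurable (fun ω => G (U (Y ω))) μ :=
    hGc.comp_aestronglyMeasurable hYint.aestronglyMeasurable
  have hbdd : ∀ (c : ℝ) (u : ℝ),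
      |Real.exp (c / d) / (Real.exp (c / d) + Real.exp (u / d))| ≤ 1 := by
    intro c u
    rw [abs_of_nonneg (by positivity)]
    rw [div_le_one (by positivity)]
    nlinarith [Real.exp_pos (u / d)]
  have hintF : Integrable (fun ω => F (U (X ω))) μ :=
    (integrable_const (1 : ℝ)).mono' hmF
      (Filter.Eventually.of_forall fun ω => hbdd Ub (Ua + U (X ω)))
  have hintG : Integrable (fun ω => G (U (Y ω))) μ :=
    (integrable_const (1 : ℝ)).mono' hmG
      (Filter.Eventually.of_forall fun ω => hbdd Ua (Ub + U (Y ω)))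
  -- pointwise strict inequality
  have hpt : ∀ ω, F (U (X ω)) < G (U (Y ω)) := by
    intro ω
    have hxy : U (Y ω) ≤ U (X ω) := hU.monotone (hdom ω)
    rw [hF, hG]
    rw [div_lt_div_iff₀ (by positivity) (by positivity)]
    have key : Real.exp (Ub / d) * Real.exp ((Ub + U (Y ω)) / d) <
        Real.exp (Ua / d) * Real.exp ((Ua + U (X ω)) / d) := by
      rw [← Real.exp_add, ← Real.exp_add]
      apply Real.exp_lt_exp.2
      rw [← add_div, ← add_div, div_lt_div_iff₀ hd hd]
      nlinarith
    nlinarith [mul_pos (Real.exp_pos (Ub / d)) (Real.exp_pos (Ua / d))]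
  -- conclude
  have hpos : 0 < ∫ ω, (G (U (Y ω)) - F (U (X ω))) ∂μ := by
    rw [integral_pos_iff_support_of_nonneg_ae
      (Filter.Eventually.of_forall fun ω => sub_nonneg.2 (hpt ω).le) (hintG.sub hintF)]
    have : Function.support (fun ω => G (U (Y ω)) - F (U (X ω))) = Set.univ := by
      ext ω; simp [sub_ne_zero.2 (ne_of_gt (hpt ω))]
    rw [this]
    simp
  rw [integral_sub hintG hintF] at hpos
  show (∫ ω, F (U (X ω)) ∂μ) < ∫ ω, G (U (Y ω)) ∂μ
  linarith
end
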